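/- Let S₁ = ∑_{m odd, n even} (m² − n²)/(m² + n²)³ and S₂ = ∑'_{(m,n)∈ℤ², n even, (m,n)≠(0,0)} (m² − n²)/(m² + n²)³. Then S₁ = S₂, i.e., the contribution with both m and n even vanishes. -/

import Mathlib

noncomputable def Fm (p : {p : ℤ × ℤ // p ≠ 0}) : ℝ :=
  ((p.1.1 : ℝ) ^ 2 - (p.1.2 : ℝ) ^ 2) / ((p.1.1 : ℝ) ^ 2 + (p.1.2 : ℝ) ^ 2) ^ 3

lemma summable_Fm : Summable Fm := by
  have h := EisensteinSeries.summable_one_div_norm_rpow (k := 4) (by norm_num)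
  have h2 : Summable fun q : ℤ × ℤ => ‖(![q.1, q.2] : Fin 2 → ℤ)‖ ^ (-4 : ℝ) := by
    refine h.comp_injective (i := fun q : ℤ × ℤ => (![q.1, q.2] : Fin 2 → ℤ)) ?_
    intro a b hab
    have h0 := congrFun hab 0
    have h1 := congrFun hab 1
    simp at h0 h1
    exact Prod.ext h0 h1
  refine (h2.subtype _).of_norm_bounded ?_
  rintro ⟨⟨m, n⟩, hp⟩
  have hM : (0:ℝ) < max |(m:ℝ)| |(n:ℝ)| := by
    have h : ¬(m = 0 ∧ n = 0) := by simpa [Prod.ext_iff] using hp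
    by_contra hc
    push_neg at hc
    have hm : |(m:ℝ)| ≤ 0 := le_trans (le_max_left _ _) hc
    have hn : |(n:ℝ)| ≤ 0 := le_trans (le_max_right _ _) hc
    exact h ⟨by exact_mod_cast abs_nonpos_iff.mp hm, by exact_mod_cast abs_nonpos_iff.mp hn⟩
  have hnorm : ‖(![m, n] : Fin 2 → ℤ)‖ = max |(m:ℝ)| |(n:ℝ)| := by
    rw [EisensteinSeries.norm_eq_max_natAbs]
    simp [Nat.cast_max, Nat.cast_natAbs]
  set M := max |(m:ℝ)| |(n:ℝ)| with hMdef
  have hMsq : M ^ 2 ≤ (m:ℝ)^2 + (n:ℝ)^2 := by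
    rcases max_cases |(m:ℝ)| |(n:ℝ)| with ⟨h1, _⟩ | ⟨h1, _⟩ <;> rw [← hMdef] at h1 <;>
      rw [h1] <;> nlinarith [sq_nonneg (m:ℝ), sq_nonneg (n:ℝ), sq_abs (m:ℝ), sq_abs (n:ℝ)]
  have hS : (0:ℝ) < (m:ℝ)^2 + (n:ℝ)^2 := lt_of_lt_of_le (by positivity) hMsq
  show ‖Fm ⟨(m,n), hp⟩‖ ≤ ‖(![m, n] : Fin 2 → ℤ)‖ ^ (-4 : ℝ)
  rw [hnorm]
  have hb : ‖Fm ⟨(m,n), hp⟩‖ ≤ 1 / ((m:ℝ)^2 + (n:ℝ)^2)^2 := by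
    rw [Fm, Real.norm_eq_abs, abs_div, abs_of_pos (by positivity : (0:ℝ) < ((m:ℝ)^2+(n:ℝ)^2)^3)]
    rw [div_le_div_iff₀ (by positivity) (by positivity)]
    have habs : |(m:ℝ)^2 - (n:ℝ)^2| ≤ (m:ℝ)^2 + (n:ℝ)^2 := by
      rw [abs_le]; constructor <;> nlinarith [sq_nonneg (m:ℝ), sq_nonneg (n:ℝ)]
    nlinarith [sq_nonneg ((m:ℝ)^2+(n:ℝ)^2), habs, hS]
  refine hb.trans ?_
  rw [Real.rpow_neg hM.le, show (4:ℝ) = ((4:ℕ):ℝ) by norm_num, Real.rpow_natCast]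
  rw [one_div, inv_le_inv₀ (by positivity) (by positivity)]
  calc M ^ 4 = (M ^ 2) ^ 2 := by ring
    _ ≤ ((m:ℝ)^2 + (n:ℝ)^2)^2 := by nlinarith [sq_nonneg M, hMsq, hS]

def swapE : {p : ℤ × ℤ // p ≠ 0} ≃ {p : ℤ × ℤ // p ≠ 0} where
  toFun p := ⟨(p.1.2, p.1.1), by
    have := p.2
    simp only [ne_eq, Prod.ext_iff, Prod.fst_zero, Prod.snd_zero] at *
    tauto⟩
  invFun p := ⟨(p.1.2, p.1.1), by
    have := p.2
    simp only [ne_eq, Prod.ext_iff, Prod.fst_zero, Prod.snd_zero] at *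
    tauto⟩
  left_inv p := by simp
  right_inv p := by simp

theorem stmt9 :
    (∑' p : {p : ℤ × ℤ // p ≠ 0}, (if Odd p.1.1 ∧ Even p.1.2 then ((p.1.1 : ℝ) ^ 2 - (p.1.2 : ℝ) ^ 2) / ((p.1.1 : ℝ) ^ 2 + (p.1.2 : ℝ) ^ 2) ^ 3 else 0))
      = (∑' p : {p : ℤ × ℤ // p ≠ 0}, (if Even p.1.2 then ((p.1.1 : ℝ) ^ 2 - (p.1.2 : ℝ) ^ 2) / ((p.1.1 : ℝ) ^ 2 + (p.1.2 : ℝ) ^ 2) ^ 3 else 0)) := by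
  classical
  set f : {p : ℤ × ℤ // p ≠ 0} → ℝ := fun p =>
    if Odd p.1.1 ∧ Even p.1.2 then Fm p else 0 with hfdef
  set h : {p : ℤ × ℤ // p ≠ 0} → ℝ := fun p =>
    if Even p.1.1 ∧ Even p.1.2 then Fm p else 0 with hhdef
  have hf : Summable f := by
    have := summable_Fm.indicator {p : {p : ℤ × ℤ // p ≠ 0} | Odd p.1.1 ∧ Even p.1.2}
    refine this.congr fun p => ?_
    simp [Set.indicator_apply, hfdef]
  have hh : Summable h := by
    have := summable_Fm.indicator {p : {p : ℤ × ℤ // p ≠ 0} | Even p.1.1 ∧ Even p.1.2}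
    refine this.congr fun p => ?_
    simp [Set.indicator_apply, hhdef]
  have hzero : ∑' p, h p = 0 := by
    have key : ∀ p, h (swapE p) = - h p := by
      rintro ⟨⟨m, n⟩, hp⟩
      by_cases hc : Even m ∧ Even n
      · simp only [hhdef, swapE, Equiv.coe_fn_mk, Fm]
        rw [if_pos ⟨hc.2, hc.1⟩, if_pos hc]
        ring
      · simp only [hhdef, swapE, Equiv.coe_fn_mk]
        rw [if_neg (fun hx => hc ⟨hx.2, hx.1⟩), if_neg hc, neg_zero]
    have h1 : ∑' p, h p = ∑' p, h (swapE p) := (swapE.tsum_eq h).symm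
    rw [funext key] at h1
    rw [tsum_neg] at h1
    linarith
  have hsplit : (∑' p : {p : ℤ × ℤ // p ≠ 0}, (if Even p.1.2 then ((p.1.1 : ℝ) ^ 2 - (p.1.2 : ℝ) ^ 2) / ((p.1.1 : ℝ) ^ 2 + (p.1.2 : ℝ) ^ 2) ^ 3 else 0)) = ∑' p, (f p + h p) := by
    refine tsum_congr fun p => ?_
    by_cases he : Even p.1.2
    · by_cases ho : Odd p.1.1
      · rw [if_pos he, hfdef, hhdef]
        simp only []
        rw [if_pos ⟨ho, he⟩, if_neg (fun hx => (Int.not_odd_iff_even.mpr hx.1) ho), add_zero]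
        rfl
      · rw [if_pos he, hfdef, hhdef]
        simp only []
        rw [if_neg (fun hx => ho hx.1), if_pos ⟨Int.not_odd_iff_even.mp ho, he⟩, zero_add]
        rfl
    · rw [if_neg he, hfdef, hhdef]
      simp only []
      rw [if_neg (fun hx => he hx.2), if_neg (fun hx => he hx.2), add_zero]
  rw [hsplit, Summable.tsum_add hf hh, hzero, add_zero]
  exact tsum_congr fun p => rfl
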